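/- Fix n ≥ 2 and a symmetric matrix C_e ∈ ℝ^{n×n}. Let M be orthogonal with A := Mᵀ C_e M, and suppose indices i ≠ j satisfy A_{ii} = A_{jj}, with b := A_{ij}. Let Ξ := E_{ij} − E_{ji} be the skew-symmetric matrix with (i,j) entry 1, (j,i) entry −1 and all other entries 0. Then for every real t: f(M·exp(tΞ)) = f(M) − b²·sin²(2t). In particular, taking t = π/4 decreases f by exactly b², and d²/dt²|_{t=0} f(M exp(tΞ)) = −8b². -/

import Mathlib

open Matrix Real

section GivensAux

variable {n : ℕ} (i j : Fin n)

local notation "Ξ" => Matrix.single i j (1:ℝ) - Matrix.single j i (1:ℝ)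
local notation "Pm" => Matrix.single i i (1:ℝ) + Matrix.single j j (1:ℝ)

lemma P_sq (hij : i ≠ j) : (Pm) * (Pm) = Pm := by
  simp [add_mul, mul_add, Matrix.single_mul_single_same,
    Matrix.single_mul_single_of_ne, hij, hij.symm]

lemma P_mul_Xi (hij : i ≠ j) : (Pm) * (Ξ) = Ξ := by
  simp [add_mul, mul_sub, Matrix.single_mul_single_same,
    Matrix.single_mul_single_of_ne, hij, hij.symm]

lemma Xi_mul_P (hij : i ≠ j) : (Ξ) * (Pm) = Ξ := by
  simp [sub_mul, mul_add, Matrix.single_mul_single_same,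
    Matrix.single_mul_single_of_ne, hij, hij.symm]
  abel

lemma Xi_sq (hij : i ≠ j) : (Ξ) * (Ξ) = -(Pm) := by
  simp [sub_mul, mul_sub, Matrix.single_mul_single_same,
    Matrix.single_mul_single_of_ne, hij, hij.symm]
  abel

lemma stdBasis_transpose (a b : Fin n) :
    (Matrix.single a b (1:ℝ))ᵀ = Matrix.single b a 1 := by
  ext p q; simp [Matrix.transpose_apply, Matrix.single, and_comm]

/-- The real-linear embedding of ℂ onto the (i,j) rotation plane. -/
noncomputable def Lmap : ℂ →L[ℝ] Matrix (Fin n) (Fin n) ℝ :=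
  LinearMap.toContinuousLinearMap
  { toFun := fun z => z.re • (Pm) + z.im • (Ξ)
    map_add' := by intro x y; simp [add_smul]; abel
    map_smul' := by intro r x; simp [Complex.smul_re, Complex.smul_im, smul_smul, smul_add] }

lemma Lmap_apply (z : ℂ) : Lmap i j z = z.re • (Pm) + z.im • (Ξ) := rfl

lemma Lmap_mul (hij : i ≠ j) (t : ℝ) (z : ℂ) :
    Lmap i j (z * (t * Complex.I)) = Lmap i j z * (t • (Ξ)) := by
  simp only [Lmap_apply, Complex.mul_re, Complex.mul_im]
  rw [add_mul, smul_mul_assoc, smul_mul_assoc, mul_smul_comm, mul_smul_comm,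
    P_mul_Xi i j hij, Xi_sq i j hij]
  rw [smul_neg]
  match_scalars <;> simp <;> ring

set_option maxHeartbeats 1000000 in
lemma exp_tXi (hij : i ≠ j) (t : ℝ) :
    NormedSpace.exp (t • (Ξ)) = 1 - (Pm) + Real.cos t • (Pm) + Real.sin t • (Ξ) := by
  set u : ℂ := (t : ℂ) * Complex.I with hu
  have hpow : ∀ m : ℕ, (t • (Ξ)) ^ (m + 1) = Lmap i j (u ^ (m + 1)) := by
    intro m
    induction m with
    | zero => simp [Lmap_apply, hu]
    | succ m ih =>
        rw [pow_succ (t • (Ξ)) (m+1), ih, ← Lmap_mul i j hij, ← pow_succ]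
  have hsum : Summable (fun m : ℕ => ((Nat.factorial m : ℝ))⁻¹ • u ^ m) :=
    NormedSpace.expSeries_summable' (𝕂 := ℝ) u
  have hLsum : Summable (fun m : ℕ => ((Nat.factorial m : ℝ))⁻¹ • Lmap i j (u ^ m)) := by
    refine (hsum.map (Lmap i j).toLinearMap.toAddMonoidHom (Lmap i j).continuous).congr
      fun m => ?_
    show Lmap i j (((Nat.factorial m : ℝ))⁻¹ • u ^ m) = _
    rw [_root_.map_smul]
  have h1 : Summable (fun m : ℕ => ((Nat.factorial (m+1) : ℝ))⁻¹ • Lmap i j (u ^ (m+1))) :=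
    (summable_nat_add_iff 1).mpr hLsum
  have hsum2 : Summable (fun m : ℕ => ((Nat.factorial m : ℝ))⁻¹ • (t • (Ξ)) ^ m) :=
    (summable_nat_add_iff 1).mp (h1.congr fun m => by rw [hpow m])
  have htail : ∑' m : ℕ, ((Nat.factorial (m+1) : ℝ))⁻¹ • u ^ (m+1)
      = (∑' m : ℕ, ((Nat.factorial m : ℝ))⁻¹ • u ^ m) - ((Nat.factorial 0 : ℝ))⁻¹ • u ^ 0 := by
    rw [hsum.tsum_eq_zero_add]; abel
  have hmain : ∑' m : ℕ, ((Nat.factorial (m+1) : ℝ))⁻¹ • (t • (Ξ)) ^ (m+1)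
      = Lmap i j (NormedSpace.exp u - 1) := by
    calc ∑' m : ℕ, ((Nat.factorial (m+1) : ℝ))⁻¹ • (t • (Ξ)) ^ (m+1)
        = ∑' m : ℕ, Lmap i j (((Nat.factorial (m+1) : ℝ))⁻¹ • u ^ (m+1)) := by
          refine tsum_congr fun m => ?_; rw [hpow]; exact ((Lmap i j).map_smul _ _).symm
      _ = Lmap i j (∑' m : ℕ, ((Nat.factorial (m+1) : ℝ))⁻¹ • u ^ (m+1)) :=
          ((Lmap i j).map_tsum ((summable_nat_add_iff 1).mpr hsum)).symm
      _ = Lmap i j (NormedSpace.exp u - 1) := by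
          rw [htail, NormedSpace.exp_eq_tsum ℝ]; norm_num
  have hexpu : NormedSpace.exp u = (Real.cos t : ℂ) + (Real.sin t : ℂ) * Complex.I := by
    rw [← Complex.exp_eq_exp_ℂ, hu, Complex.exp_mul_I,
      Complex.ofReal_cos, Complex.ofReal_sin]
  have hL1 : Lmap i j (1 : ℂ) = Pm := by simp [Lmap_apply]
  have hLe : Lmap i j ((Real.cos t : ℂ) + (Real.sin t : ℂ) * Complex.I)
      = Real.cos t • (Pm) + Real.sin t • (Ξ) := by
    simp [Lmap_apply, Complex.cos_ofReal_re, Complex.sin_ofReal_re]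
  simp only [NormedSpace.exp_eq_tsum ℝ]
  rw [hsum2.tsum_eq_zero_add, hmain, map_sub, hexpu, hLe, hL1]
  norm_num
  abel

/-- The Givens rotation matrix. -/
noncomputable def Gmat (t : ℝ) : Matrix (Fin n) (Fin n) ℝ :=
  1 - (Pm) + Real.cos t • (Pm) + Real.sin t • (Ξ)

lemma exp_eq_Gmat (hij : i ≠ j) (t : ℝ) :
    NormedSpace.exp (t • (Ξ)) = Gmat i j t :=
  exp_tXi i j hij t

lemma Gmat_transpose (t : ℝ) : (Gmat i j t)ᵀ = Gmat i j (-t) := by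
  unfold Gmat
  rw [transpose_add, transpose_add, transpose_sub, transpose_one, transpose_smul,
    transpose_smul, transpose_add, transpose_sub, stdBasis_transpose, stdBasis_transpose,
    stdBasis_transpose, stdBasis_transpose, Real.cos_neg, Real.sin_neg]
  module

lemma rot_orth_abstract (P X : Matrix (Fin n) (Fin n) ℝ) (hPP : P * P = P)
    (hPX : P * X = X) (hXP : X * P = X) (hXX : X * X = -P) (c s : ℝ)
    (h : s ^ 2 + c ^ 2 = 1) :
    (1 - P + c • P + (-s) • X) * (1 - P + c • P + s • X) = 1 := by
  simp only [mul_add, add_mul, sub_mul, mul_sub, neg_mul, mul_neg, smul_mul_assoc,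
    mul_smul_comm, mul_one, one_mul, hPP, hPX, hXP, hXX, smul_smul, smul_neg, neg_smul]
  match_scalars <;> first
      | ring1
      | linear_combination h
      | linear_combination -h
      | linear_combination c * h
      | linear_combination -c * h
      | nlinarith [h]

lemma Gmat_orth (hij : i ≠ j) (t : ℝ) : (Gmat i j t)ᵀ * Gmat i j t = 1 := by
  rw [Gmat_transpose]
  unfold Gmat
  rw [Real.cos_neg, Real.sin_neg, neg_smul, ← neg_smul (Real.sin t)]
  exact rot_orth_abstract _ _ (P_sq i j hij) (P_mul_Xi i j hij) (Xi_mul_P i j hij)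
    (Xi_sq i j hij) _ _ (Real.sin_sq_add_cos_sq t)

lemma sum_two (hij : i ≠ j) {f : Fin n → ℝ} (h : ∀ k, k ≠ i → k ≠ j → f k = 0) :
    ∑ k, f k = f i + f j :=
  Finset.sum_eq_add i j hij (fun c _ hc => h c hc.1 hc.2) (by simp) (by simp)

lemma Gmat_col_i (hij : i ≠ j) (t : ℝ) (p : Fin n) :
    Gmat i j t p i = if p = i then Real.cos t else if p = j then -Real.sin t else 0 := by
  unfold Gmat
  simp only [Matrix.add_apply, Matrix.sub_apply, Matrix.smul_apply, Matrix.one_apply,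
    Matrix.single, Matrix.of_apply, smul_eq_mul]
  rcases eq_or_ne p i with rfl | hpi
  · simp [hij, hij.symm]
  · rcases eq_or_ne p j with rfl | hpj
    · simp [hij, hij.symm]
    · simp [hpi, hpj, Ne.symm hpi, Ne.symm hpj, hij.symm]

lemma Gmat_col_j (hij : i ≠ j) (t : ℝ) (p : Fin n) :
    Gmat i j t p j = if p = i then Real.sin t else if p = j then Real.cos t else 0 := by
  unfold Gmat
  simp only [Matrix.add_apply, Matrix.sub_apply, Matrix.smul_apply, Matrix.one_apply,
    Matrix.single, Matrix.of_apply, smul_eq_mul]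
  rcases eq_or_ne p i with rfl | hpi
  · simp [hij, hij.symm]
  · rcases eq_or_ne p j with rfl | hpj
    · simp [hij, hij.symm]
    · simp [hpi, hpj, Ne.symm hpi, Ne.symm hpj, hij.symm]

lemma Gmat_col_other (t : ℝ) {k : Fin n} (hki : k ≠ i) (hkj : k ≠ j) (p : Fin n) :
    Gmat i j t p k = if p = k then 1 else 0 := by
  unfold Gmat
  simp only [Matrix.add_apply, Matrix.sub_apply, Matrix.smul_apply, Matrix.one_apply,
    Matrix.single, Matrix.of_apply, smul_eq_mul]
  rcases eq_or_ne p k with rfl | hpk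
  · simp [Ne.symm hki, Ne.symm hkj, hki, hkj]
  · simp [hpk, Ne.symm hki, Ne.symm hkj]

variable (B : Matrix (Fin n) (Fin n) ℝ)

lemma conj_diag_other (t : ℝ) {k : Fin n} (hki : k ≠ i) (hkj : k ≠ j) :
    ((Gmat i j t)ᵀ * B * Gmat i j t) k k = B k k := by
  rw [Matrix.mul_apply, Finset.sum_eq_single k]
  · rw [Gmat_col_other i j t hki hkj, if_pos rfl, mul_one,
      Matrix.mul_apply, Finset.sum_eq_single k]
    · rw [Matrix.transpose_apply, Gmat_col_other i j t hki hkj, if_pos rfl, one_mul]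
    · intro q _ hq
      rw [Matrix.transpose_apply, Gmat_col_other i j t hki hkj, if_neg hq, zero_mul]
    · intro h; exact absurd (Finset.mem_univ k) h
  · intro q _ hq
    rw [Gmat_col_other i j t hki hkj, if_neg hq, mul_zero]
  · intro h; exact absurd (Finset.mem_univ k) h

lemma conj_diag_i (hij : i ≠ j) (t : ℝ) :
    ((Gmat i j t)ᵀ * B * Gmat i j t) i i =
      Real.cos t ^ 2 * B i i - Real.cos t * Real.sin t * (B i j + B j i)
        + Real.sin t ^ 2 * B j j := by
  have hrow : ∀ q, ((Gmat i j t)ᵀ * B) i q = Real.cos t * B i q - Real.sin t * B j q := by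
    intro q
    rw [Matrix.mul_apply, sum_two i j hij]
    · rw [Matrix.transpose_apply, Matrix.transpose_apply,
        Gmat_col_i i j hij t i, Gmat_col_i i j hij t j]
      simp [hij.symm]
      ring
    · intro k hki hkj
      rw [Matrix.transpose_apply, Gmat_col_i i j hij t k, if_neg hki, if_neg hkj, zero_mul]
  rw [Matrix.mul_apply, sum_two i j hij]
  · rw [hrow, hrow, Gmat_col_i i j hij t i, Gmat_col_i i j hij t j]
    simp [hij.symm]
    ring
  · intro k hki hkj
    rw [Gmat_col_i i j hij t k, if_neg hki, if_neg hkj, mul_zero]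

lemma conj_diag_j (hij : i ≠ j) (t : ℝ) :
    ((Gmat i j t)ᵀ * B * Gmat i j t) j j =
      Real.sin t ^ 2 * B i i + Real.cos t * Real.sin t * (B i j + B j i)
        + Real.cos t ^ 2 * B j j := by
  have hrow : ∀ q, ((Gmat i j t)ᵀ * B) j q = Real.sin t * B i q + Real.cos t * B j q := by
    intro q
    rw [Matrix.mul_apply, sum_two i j hij]
    · rw [Matrix.transpose_apply, Matrix.transpose_apply,
        Gmat_col_j i j hij t i, Gmat_col_j i j hij t j]
      simp [hij.symm]
    · intro k hki hkj
      rw [Matrix.transpose_apply, Gmat_col_j i j hij t k, if_neg hki, if_neg hkj, zero_mul]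
  rw [Matrix.mul_apply, sum_two i j hij]
  · rw [hrow, hrow, Gmat_col_j i j hij t i, Gmat_col_j i j hij t j]
    simp [hij.symm]
    ring
  · intro k hki hkj
    rw [Gmat_col_j i j hij t k, if_neg hki, if_neg hkj, mul_zero]

end GivensAux

/-- The diagonal matrix whose diagonal agrees with `X`. -/
noncomputable def diagPart {n : ℕ} (X : Matrix (Fin n) (Fin n) ℝ) :
    Matrix (Fin n) (Fin n) ℝ :=
  Matrix.diagonal (fun i => X i i)

/-- Frobenius norm of a real square matrix. -/
noncomputable def frobNorm {n : ℕ} (X : Matrix (Fin n) (Fin n) ℝ) : ℝ :=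
  Real.sqrt (∑ i, ∑ j, (X i j) ^ 2)

/-- Rotated covariance `A(M) = Mᵀ C_e M`. -/
noncomputable def rotA {n : ℕ} (Ce M : Matrix (Fin n) (Fin n) ℝ) :
    Matrix (Fin n) (Fin n) ℝ := Mᵀ * Ce * M

/-- The diagonalization objective `f(M) = (1/2)‖off(A(M))‖_F²`. -/
noncomputable def objF {n : ℕ} (Ce M : Matrix (Fin n) (Fin n) ℝ) : ℝ :=
  (1 / 2) * frobNorm (rotA Ce M - diagPart (rotA Ce M)) ^ 2

noncomputable def Ssum {n : ℕ} (X : Matrix (Fin n) (Fin n) ℝ) : ℝ := ∑ p, ∑ q, X p q ^ 2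

lemma frob_sq {n : ℕ} (X : Matrix (Fin n) (Fin n) ℝ) : frobNorm X ^ 2 = Ssum X :=
  Real.sq_sqrt (by positivity)

lemma Ssum_off {n : ℕ} (X : Matrix (Fin n) (Fin n) ℝ) :
    Ssum (X - diagPart X) = Ssum X - ∑ k, X k k ^ 2 := by
  unfold Ssum diagPart
  rw [← Finset.sum_sub_distrib]
  refine Finset.sum_congr rfl fun p _ => ?_
  have h : ∀ q, ((X - Matrix.diagonal fun i => X i i) p q) ^ 2
      = X p q ^ 2 - (if q = p then X p p ^ 2 else 0) := by
    intro q
    rw [Matrix.sub_apply, Matrix.diagonal_apply]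
    rcases eq_or_ne q p with rfl | hq
    · simp
    · simp [hq, Ne.symm hq]
  simp only [h]
  rw [Finset.sum_sub_distrib, Finset.sum_ite_eq' Finset.univ p (fun _ => X p p ^ 2)]
  simp

lemma objF_eq {n : ℕ} (Ce M : Matrix (Fin n) (Fin n) ℝ) :
    objF Ce M = (1 / 2) * (Ssum (rotA Ce M) - ∑ k, rotA Ce M k k ^ 2) := by
  rw [objF, frob_sq, Ssum_off]

lemma Ssum_eq_trace {n : ℕ} (X : Matrix (Fin n) (Fin n) ℝ) :
    Ssum X = Matrix.trace (Xᵀ * X) := by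
  unfold Ssum
  rw [Matrix.trace]
  simp only [Matrix.diag, Matrix.mul_apply, Matrix.transpose_apply, ← sq]
  exact Finset.sum_comm

lemma Ssum_conj {n : ℕ} (G B : Matrix (Fin n) (Fin n) ℝ) (hG : Gᵀ * G = 1)
    (hB : Bᵀ = B) : Ssum (Gᵀ * B * G) = Ssum B := by
  have hGG : G * Gᵀ = 1 := mul_eq_one_comm.mp hG
  rw [Ssum_eq_trace, Ssum_eq_trace]
  have h1 : (Gᵀ * B * G)ᵀ = Gᵀ * B * G := by
    rw [Matrix.transpose_mul, Matrix.transpose_mul, Matrix.transpose_transpose, hB,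
      Matrix.mul_assoc]
  rw [h1, hB]
  have h2 : Gᵀ * B * G * (Gᵀ * B * G) = Gᵀ * (B * B * G) := by
    calc Gᵀ * B * G * (Gᵀ * B * G) = Gᵀ * B * ((G * Gᵀ) * (B * G)) := by
          simp only [Matrix.mul_assoc]
      _ = Gᵀ * (B * B * G) := by rw [hGG, one_mul, Matrix.mul_assoc, Matrix.mul_assoc]
  rw [h2, Matrix.trace_mul_comm, Matrix.mul_assoc, hGG, mul_one]

lemma rotA_transpose {n : ℕ} (Ce M : Matrix (Fin n) (Fin n) ℝ) (hCe : Ceᵀ = Ce) :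
    (rotA Ce M)ᵀ = rotA Ce M := by
  unfold rotA
  rw [Matrix.transpose_mul, Matrix.transpose_mul, Matrix.transpose_transpose, hCe,
    Matrix.mul_assoc]

lemma rotA_mul {n : ℕ} (Ce M G : Matrix (Fin n) (Fin n) ℝ) :
    rotA Ce (M * G) = Gᵀ * rotA Ce M * G := by
  unfold rotA
  rw [Matrix.transpose_mul]
  simp only [Matrix.mul_assoc]

lemma givens_core {n : ℕ} (Ce M : Matrix (Fin n) (Fin n) ℝ) (hCe : Ceᵀ = Ce)
    (i j : Fin n) (hij : i ≠ j)
    (hdeg : rotA Ce M i i = rotA Ce M j j) (t : ℝ) :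
    objF Ce (M * Gmat i j t) = objF Ce M - rotA Ce M i j ^ 2 * Real.sin (2 * t) ^ 2 := by
  have hAsym : (rotA Ce M)ᵀ = rotA Ce M := rotA_transpose Ce M hCe
  have hAji : rotA Ce M j i = rotA Ce M i j := congrFun (congrFun hAsym i) j
  have horth := Gmat_orth i j hij t
  have hconj := rotA_mul Ce M (Gmat i j t)
  have hS : Ssum (rotA Ce (M * Gmat i j t)) = Ssum (rotA Ce M) := by
    rw [hconj]; exact Ssum_conj _ _ horth hAsym
  set m := Real.sin (2 * t) * rotA Ce M i j with hm
  have hsub : ∑ k, (rotA Ce (M * Gmat i j t) k k ^ 2 - rotA Ce M k k ^ 2) = 2 * m ^ 2 := by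
    rw [sum_two i j hij]
    · rw [hconj, conj_diag_i i j (rotA Ce M) hij t, conj_diag_j i j (rotA Ce M) hij t,
        hAji, ← hdeg, hm, Real.sin_two_mul]
      linear_combination (2 * rotA Ce M i i ^ 2 * (Real.sin t ^ 2 + Real.cos t ^ 2 + 1)) *
        Real.sin_sq_add_cos_sq t
    · intro k hki hkj
      rw [hconj, conj_diag_other i j (rotA Ce M) t hki hkj]
      ring
  rw [Finset.sum_sub_distrib] at hsub
  rw [objF_eq, objF_eq, hS]
  have : ∑ k, rotA Ce (M * Gmat i j t) k k ^ 2
      = (∑ k, rotA Ce M k k ^ 2) + 2 * m ^ 2 := by linarith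
  rw [this, hm]
  ring

theorem givens_escape_formula {n : ℕ} (hn : 2 ≤ n)
    (Ce M : Matrix (Fin n) (Fin n) ℝ) (hCe : Ceᵀ = Ce) (hM : Mᵀ * M = 1)
    (i j : Fin n) (hij : i ≠ j)
    (hdeg : rotA Ce M i i = rotA Ce M j j) :
    (∀ t : ℝ,
      objF Ce (M * NormedSpace.exp
          (t • (Matrix.single i j (1 : ℝ) - Matrix.single j i (1 : ℝ))))
        = objF Ce M - rotA Ce M i j ^ 2 * Real.sin (2 * t) ^ 2) ∧
    objF Ce (M * NormedSpace.exp
        ((π / 4) • (Matrix.single i j (1 : ℝ) - Matrix.single j i (1 : ℝ))))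
      = objF Ce M - rotA Ce M i j ^ 2 ∧
    iteratedDeriv 2
      (fun t : ℝ => objF Ce (M * NormedSpace.exp
          (t • (Matrix.single i j (1 : ℝ) - Matrix.single j i (1 : ℝ))))) 0
      = -8 * rotA Ce M i j ^ 2 := by
  have h1 : ∀ t : ℝ,
      objF Ce (M * NormedSpace.exp
          (t • (Matrix.single i j (1 : ℝ) - Matrix.single j i (1 : ℝ))))
        = objF Ce M - rotA Ce M i j ^ 2 * Real.sin (2 * t) ^ 2 := by
    intro t
    rw [exp_eq_Gmat i j hij t]
    exact givens_core Ce M hCe i j hij hdeg t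
  refine ⟨h1, ?_, ?_⟩
  · rw [h1 (π / 4)]
    have h2 : (2 : ℝ) * (π / 4) = π / 2 := by ring
    rw [h2, Real.sin_pi_div_two]
    ring
  · set b2 := rotA Ce M i j ^ 2 with hb2
    set K := objF Ce M - b2 / 2 with hK
    have hfun : (fun t : ℝ => objF Ce (M * NormedSpace.exp
          (t • (Matrix.single i j (1 : ℝ) - Matrix.single j i (1 : ℝ)))))
        = fun t : ℝ => K + (b2 / 2) * Real.cos (2 * (2 * t)) := by
      funext t
      rw [h1 t, Real.sin_sq_eq_half_sub, hK]
      ring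
    rw [hfun]
    have hlin : ∀ x : ℝ, HasDerivAt (fun t : ℝ => 2 * (2 * t)) 4 x := by
      intro x
      have h := ((hasDerivAt_id x).const_mul (2:ℝ)).const_mul (2:ℝ)
      simp only [id] at h
      exact h.congr_deriv (by norm_num)
    have hd1 : ∀ x : ℝ, HasDerivAt (fun t : ℝ => K + (b2 / 2) * Real.cos (2 * (2 * t)))
        ((b2 / 2) * (-Real.sin (2 * (2 * x)) * 4)) x := by
      intro x
      have hcos := (Real.hasDerivAt_cos (2 * (2 * x))).comp x (hlin x)
      exact (hcos.const_mul (b2 / 2)).const_add K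
    have hderiv1 : deriv (fun t : ℝ => K + (b2 / 2) * Real.cos (2 * (2 * t)))
        = fun x : ℝ => (b2 / 2) * (-Real.sin (2 * (2 * x)) * 4) :=
      funext fun x => (hd1 x).deriv
    have hd2 : HasDerivAt (fun x : ℝ => (b2 / 2) * (-Real.sin (2 * (2 * x)) * 4))
        ((b2 / 2) * (-(Real.cos (2 * (2 * 0)) * 4) * 4)) 0 := by
      have hsin := (Real.hasDerivAt_sin (2 * (2 * 0))).comp 0 (hlin 0)
      exact ((hsin.neg.mul_const 4).const_mul (b2 / 2))
    rw [show (2 : ℕ) = 1 + 1 from rfl, iteratedDeriv_succ, iteratedDeriv_one, hderiv1,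
      hd2.deriv]
    norm_num [Real.cos_zero]
    ring
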